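/- Fix ε ∈ (0,1) and c > 0, and let t0 < t1 with τ := t1 − t0 satisfying: τ < ε·R_min²/c, τ < R_min/(2‖R'‖), and τ < 2√(1+√(1−ε²))·R_min/√‖(R²)''‖. Then the reduced Lagrangian action of the Dirichlet solution r satisfies ∫_{t0}^{t1} ( ½·r'(t)² − c²/(2r(t)²) ) dt = ½·τ·A(t0,t1) + c·arctan( cτ/√(R(t0)²R(t1)² − c²τ²) ) − cπ, i.e. it equals h(t0,t1) − cπ. -/

import Mathlib

noncomputable section

/-- Sup-norm of a function (for a continuous 1-periodic function this is the maximum of `|f|`). -/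
def supNorm (f : ℝ → ℝ) : ℝ := sSup (Set.range fun t => |f t|)

/-- Minimum value of `R` (attained for a continuous 1-periodic `R`). -/
def Rmin (R : ℝ → ℝ) : ℝ := sInf (Set.range R)

/-- Maximum value of `R` (attained for a continuous 1-periodic `R`). -/
def Rmax (R : ℝ → ℝ) : ℝ := sSup (Set.range R)

/-- The constant `σ = min { R_min/(2‖R'‖) , 2√(1+√(1−ε²))·R_min/√‖(R²)''‖ }`. -/
def sigmaR (R : ℝ → ℝ) (ε : ℝ) : ℝ :=
  min (Rmin R / (2 * supNorm (deriv R)))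
    (2 * Real.sqrt (1 + Real.sqrt (1 - ε ^ 2)) * Rmin R /
      Real.sqrt (supNorm (deriv (deriv (fun t => R t ^ 2)))))

/-- `√(R(t0)²R(t1)² − c²(t1−t0)²)`. -/
def Ssq (R : ℝ → ℝ) (c t0 t1 : ℝ) : ℝ :=
  Real.sqrt (R t0 ^ 2 * R t1 ^ 2 - c ^ 2 * (t1 - t0) ^ 2)

/-- `A(t0,t1) = (R(t0)² + R(t1)² + 2√(R(t0)²R(t1)² − c²(t1−t0)²))/(t1−t0)²`. -/
def Afun (R : ℝ → ℝ) (c t0 t1 : ℝ) : ℝ :=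
  (R t0 ^ 2 + R t1 ^ 2 + 2 * Ssq R c t0 t1) / (t1 - t0) ^ 2

/-- `B = −( t0 + (R(t0)² + √(R(t0)²R(t1)² − c²(t1−t0)²))/((t1−t0)·A) )`. -/
def Bfun (R : ℝ → ℝ) (c t0 t1 : ℝ) : ℝ :=
  -(t0 + (R t0 ^ 2 + Ssq R c t0 t1) / ((t1 - t0) * Afun R c t0 t1))

/-- The Dirichlet solution `r(t) = √((A²(t+B)² + c²)/A)`. -/
def dirich (R : ℝ → ℝ) (c t0 t1 t : ℝ) : ℝ :=
  Real.sqrt ((Afun R c t0 t1 ^ 2 * (t + Bfun R c t0 t1) ^ 2 + c ^ 2) / Afun R c t0 t1)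

/-- The generating function
`h(t0,t1) = ½(t1−t0)·A(t0,t1) + c·arctan( c(t1−t0)/√(R(t0)²R(t1)² − c²(t1−t0)²) )`. -/
def hgen (R : ℝ → ℝ) (c t0 t1 : ℝ) : ℝ :=
  (1 / 2) * (t1 - t0) * Afun R c t0 t1 +
    c * Real.arctan (c * (t1 - t0) / Ssq R c t0 t1)

/-- `∂₁h`, the partial derivative of `h` in its first argument. -/
def d1h (R : ℝ → ℝ) (c t0 t1 : ℝ) : ℝ := deriv (fun s => hgen R c s t1) t0

/-- `∂₂h`, the partial derivative of `h` in its second argument. -/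
def d2h (R : ℝ → ℝ) (c t0 t1 : ℝ) : ℝ := deriv (fun s => hgen R c t0 s) t1

/-- `∂₁₂h`, the mixed second partial derivative of `h`. -/
def d12h (R : ℝ → ℝ) (c t0 t1 : ℝ) : ℝ := deriv (fun s => d1h R c t0 s) t1


open Real in
lemma rmin_facts (R : ℝ → ℝ) (hcont : Continuous R) (hper : ∀ t, R (t + 1) = R t)
    (hpos : ∀ t, 0 < R t) : 0 < Rmin R ∧ ∀ t, Rmin R ≤ R t := by
  have hP : Function.Periodic R 1 := hper
  have hrange : Set.range R = R '' Set.Icc 0 1 := by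
    apply Set.Subset.antisymm
    · rintro y ⟨t, rfl⟩
      refine ⟨Int.fract t, ⟨Int.fract_nonneg t, (Int.fract_lt_one t).le⟩, ?_⟩
      have h : Int.fract t = t - (⌊t⌋ : ℤ) * 1 := by rw [Int.fract]; ring
      rw [h, hP.sub_int_mul_eq]
    · rintro y ⟨t, _, rfl⟩; exact ⟨t, rfl⟩
  have hK : IsCompact (R '' Set.Icc 0 1) := (isCompact_Icc).image hcont
  have hne : (R '' Set.Icc 0 1).Nonempty := ⟨R 0, ⟨0, by simp, rfl⟩⟩
  constructor
  · have hmem : sInf (R '' Set.Icc 0 1) ∈ R '' Set.Icc 0 1 := hK.sInf_mem hne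
    rw [Rmin, hrange]
    obtain ⟨s, _, hs⟩ := hmem
    rw [← hs]; exact hpos s
  · intro t
    rw [Rmin, hrange]
    have hmem : R t ∈ R '' Set.Icc 0 1 := hrange ▸ Set.mem_range_self t
    exact csInf_le hK.bddBelow hmem

set_option maxHeartbeats 1000000

/-- Under the time-gap conditions of Proposition 3.1 the reduced Lagrangian
action of the Dirichlet solution equals
`½(t1−t0)A(t0,t1) + c·arctan( c(t1−t0)/√(R(t0)²R(t1)² − c²(t1−t0)²) ) − cπ = h(t0,t1) − cπ`. -/
theorem lagrangian_action_formula (R : ℝ → ℝ) (ε c t0 t1 : ℝ)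
    (hC : ContDiff ℝ 2 R) (hper : ∀ t, R (t + 1) = R t) (hpos : ∀ t, 0 < R t)
    (hnc : ∃ a b, R a ≠ R b)
    (hε : ε ∈ Set.Ioo (0 : ℝ) 1) (hc : 0 < c) (ht : t0 < t1)
    (hτ1 : t1 - t0 < ε * Rmin R ^ 2 / c)
    (hτ2 : t1 - t0 < Rmin R / (2 * supNorm (deriv R)))
    (hτ3 : t1 - t0 < 2 * Real.sqrt (1 + Real.sqrt (1 - ε ^ 2)) * Rmin R /
      Real.sqrt (supNorm (deriv (deriv (fun t => R t ^ 2))))) :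
    (∫ t in t0..t1,
        ((1 / 2) * (deriv (dirich R c t0 t1) t) ^ 2 - c ^ 2 / (2 * dirich R c t0 t1 t ^ 2))) =
      (1 / 2) * (t1 - t0) * Afun R c t0 t1 +
        c * Real.arctan (c * (t1 - t0) / Ssq R c t0 t1) - c * Real.pi ∧
    (∫ t in t0..t1,
        ((1 / 2) * (deriv (dirich R c t0 t1) t) ^ 2 - c ^ 2 / (2 * dirich R c t0 t1 t ^ 2))) =
      hgen R c t0 t1 - c * Real.pi := by
  obtain ⟨hm0, hmle⟩ := rmin_facts R hC.continuous hper hpos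
  obtain ⟨hε0, hε1⟩ := hε
  have hτ : 0 < t1 - t0 := sub_pos.mpr ht
  have h1 : c * (t1 - t0) < Rmin R ^ 2 := by
    have h2 : (t1 - t0) * c < ε * Rmin R ^ 2 := (lt_div_iff₀ hc).mp hτ1
    nlinarith [sq_nonneg (Rmin R)]
  have hctR : c * (t1 - t0) < R t0 * R t1 := by
    nlinarith [hmle t0, hmle t1]
  have hS2pos : 0 < R t0 ^ 2 * R t1 ^ 2 - c ^ 2 * (t1 - t0) ^ 2 := by
    nlinarith [mul_pos hc hτ, mul_pos (hpos t0) (hpos t1)]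
  obtain ⟨S, hS⟩ : ∃ S, S = Ssq R c t0 t1 := ⟨_, rfl⟩
  have hSpos : 0 < S := by rw [hS, Ssq]; exact Real.sqrt_pos.mpr hS2pos
  have hSsq : S ^ 2 = R t0 ^ 2 * R t1 ^ 2 - c ^ 2 * (t1 - t0) ^ 2 := by
    rw [hS, Ssq]; exact Real.sq_sqrt hS2pos.le
  obtain ⟨A, hA⟩ : ∃ A, A = Afun R c t0 t1 := ⟨_, rfl⟩
  have hAval : A = (R t0 ^ 2 + R t1 ^ 2 + 2 * S) / (t1 - t0) ^ 2 := by
    rw [hA, Afun, ← hS]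
  have hApos : 0 < A := by
    rw [hAval]
    exact div_pos (by nlinarith [pow_pos (hpos t0) 2, pow_pos (hpos t1) 2]) (by positivity)
  have hA2 : (t1 - t0) ^ 2 * A = R t0 ^ 2 + R t1 ^ 2 + 2 * S := by
    rw [hAval]; field_simp
  obtain ⟨B, hB⟩ : ∃ B, B = Bfun R c t0 t1 := ⟨_, rfl⟩
  have hBval : B = -(t0 + (R t0 ^ 2 + S) / ((t1 - t0) * A)) := by
    rw [hB, Bfun, ← hS, ← hA]
  have hB0 : A * (t0 + B) = -((R t0 ^ 2 + S) / (t1 - t0)) := by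
    rw [hBval]; field_simp; ring
  have hB1 : A * (t1 + B) = (R t1 ^ 2 + S) / (t1 - t0) := by
    rw [hBval]
    field_simp
    linear_combination hA2
  have hdir : dirich R c t0 t1 = fun t => Real.sqrt ((A ^ 2 * (t + B) ^ 2 + c ^ 2) / A) := by
    funext t; rw [dirich, ← hA, ← hB]
  have hfpos : ∀ t : ℝ, 0 < (A ^ 2 * (t + B) ^ 2 + c ^ 2) / A := by
    intro t; exact div_pos (by positivity) hApos
  -- derivative of the Dirichlet solution
  have hder : ∀ t : ℝ, HasDerivAt (fun t => Real.sqrt ((A ^ 2 * (t + B) ^ 2 + c ^ 2) / A))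
      (A * (t + B) / Real.sqrt ((A ^ 2 * (t + B) ^ 2 + c ^ 2) / A)) t := by
    intro t
    have h1 := (((((hasDerivAt_id t).add_const B).pow 2).const_mul (A ^ 2)).add_const
      (c ^ 2)).div_const A
    have h2 := h1.sqrt (hfpos t).ne'
    refine h2.congr_deriv ?_
    have hsq : Real.sqrt ((A ^ 2 * (t + B) ^ 2 + c ^ 2) / A) ≠ 0 :=
      (Real.sqrt_pos.mpr (hfpos t)).ne'
    simp only [id_eq, pow_one, Pi.pow_apply]
    push_cast
    field_simp
  -- pointwise value of the integrand
  have hgφ : ∀ t : ℝ, (1 / 2) * (deriv (fun t => Real.sqrt ((A ^ 2 * (t + B) ^ 2 + c ^ 2) / A)) t) ^ 2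
      - c ^ 2 / (2 * Real.sqrt ((A ^ 2 * (t + B) ^ 2 + c ^ 2) / A) ^ 2)
      = A / 2 - A * c ^ 2 / (A ^ 2 * (t + B) ^ 2 + c ^ 2) := by
    intro t
    rw [(hder t).deriv, div_pow, Real.sq_sqrt (hfpos t).le]
    have hd2 : (0:ℝ) < A ^ 2 * (t + B) ^ 2 + c ^ 2 := by positivity
    field_simp
    ring
  -- antiderivative
  have hF : ∀ t : ℝ, HasDerivAt (fun s => A / 2 * s - c * Real.arctan (A * (s + B) / c))
      (A / 2 - A * c ^ 2 / (A ^ 2 * (t + B) ^ 2 + c ^ 2)) t := by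
    intro t
    have h1 : HasDerivAt (fun s : ℝ => A * (s + B) / c) (A * 1 / c) t :=
      (((hasDerivAt_id t).add_const B).const_mul A).div_const c
    have h2 := h1.arctan
    have h3 := ((hasDerivAt_id t).const_mul (A / 2)).sub (h2.const_mul c)
    refine h3.congr_deriv ?_
    have hd : (0:ℝ) < A ^ 2 * (t + B) ^ 2 + c ^ 2 := by positivity
    simp only [id_eq, mul_one]
    rw [eq_comm]
    field_simp
    ring
  have hgcont : Continuous (fun t : ℝ => A / 2 - A * c ^ 2 / (A ^ 2 * (t + B) ^ 2 + c ^ 2)) := by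
    apply Continuous.sub continuous_const
    refine continuous_const.div ?_ (fun t => by positivity)
    exact (continuous_const.mul ((continuous_id.add continuous_const).pow 2)).add continuous_const
  have hI : (∫ t in t0..t1,
        ((1 / 2) * (deriv (dirich R c t0 t1) t) ^ 2 - c ^ 2 / (2 * dirich R c t0 t1 t ^ 2)))
      = (A / 2 * t1 - c * Real.arctan (A * (t1 + B) / c))
        - (A / 2 * t0 - c * Real.arctan (A * (t0 + B) / c)) := by
    simp only [hdir]
    rw [show (fun t => (1 / 2) * (deriv (fun t => Real.sqrt ((A ^ 2 * (t + B) ^ 2 + c ^ 2) / A)) t) ^ 2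
      - c ^ 2 / (2 * Real.sqrt ((A ^ 2 * (t + B) ^ 2 + c ^ 2) / A) ^ 2))
      = fun t => A / 2 - A * c ^ 2 / (A ^ 2 * (t + B) ^ 2 + c ^ 2) from funext hgφ]
    exact intervalIntegral.integral_eq_sub_of_hasDerivAt (fun t _ => hF t)
      (hgcont.intervalIntegrable t0 t1)
  -- arctan computation
  obtain ⟨x1, hx1⟩ : ∃ x, x = (R t1 ^ 2 + S) / ((t1 - t0) * c) := ⟨_, rfl⟩
  obtain ⟨x0, hx0⟩ : ∃ x, x = (R t0 ^ 2 + S) / ((t1 - t0) * c) := ⟨_, rfl⟩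
  have hτc : (0:ℝ) < (t1 - t0) * c := mul_pos hτ hc
  have hx1pos : 0 < x1 := by
    rw [hx1]; exact div_pos (by positivity) hτc
  have hprod : 1 < x1 * x0 := by
    rw [hx1, hx0, div_mul_div_comm, lt_div_iff₀ (by positivity)]
    nlinarith [hSsq, mul_pos hSpos hSpos, mul_pos hSpos (pow_pos (hpos t0) 2),
      mul_pos hSpos (pow_pos (hpos t1) 2)]
  have harc := Real.arctan_add_eq_add_pi hprod hx1pos
  have hne : 1 - x1 * x0 ≠ 0 := by intro h; nlinarith
  have hratio : (x1 + x0) / (1 - x1 * x0) = -(c * (t1 - t0) / S) := by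
    rw [div_eq_iff hne, hx1, hx0]
    field_simp
    linear_combination hSsq
  rw [hratio, Real.arctan_neg] at harc
  have he1 : A * (t1 + B) / c = x1 := by rw [hB1, hx1, div_div]
  have he0 : A * (t0 + B) / c = -x0 := by rw [hB0, hx0, neg_div, div_div]
  have hS' : Ssq R c t0 t1 = S := hS.symm
  have hA' : Afun R c t0 t1 = A := hA.symm
  constructor
  · rw [hI, he1, he0, Real.arctan_neg, hS', hA']
    linear_combination (-c) * harc
  · rw [hgen, hI, he1, he0, Real.arctan_neg, hS', hA']
    linear_combination (-c) * harc
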